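/- Let I ⊆ ℝ be an interval and let (a,b,c) : I → ℝ³ be a differentiable solution of the gauged bracket Bach flow with a(t) > 0 for all t ∈ I. Then for every t ∈ I the function t ↦ b(t)²/a(t)² is differentiable and its derivative satisfies d/dt (b²/a²) ≤ −(2/3)·(b(t)²/a(t)²)·(a(t)² + b(t)² + c(t)²)². -/

import Mathlib

/-- First component of the right-hand side `F` of the gauged bracket Bach flow. -/
noncomputable def Fa (a b c : ℝ) : ℝ :=
  -(a / 48) * (44*a^4 + 72*a^2*b^2 - 5*a^2*c^2 + 28*b^4 + 24*b^2*c^2 - 4*c^4)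

/-- Second component of the right-hand side `F` of the gauged bracket Bach flow. -/
noncomputable def Fb (a b c : ℝ) : ℝ :=
  -(b / 48) * (60*a^4 + 104*a^2*b^2 + 57*a^2*c^2 + 44*b^4 + 104*b^2*c^2 + 60*c^4)

/-- Third component of the right-hand side `F` of the gauged bracket Bach flow. -/
noncomputable def Fc (a b c : ℝ) : ℝ :=
  -(c / 48) * (-4*a^4 + 24*a^2*b^2 - 5*a^2*c^2 + 28*b^4 + 72*b^2*c^2 + 44*c^4)

/-- `(a,b,c) : ℝ → ℝ³` is a differentiable solution of the gauged bracket Bach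
flow on the set `S ⊆ ℝ`. -/
def IsBachFlowSolution (a b c : ℝ → ℝ) (S : Set ℝ) : Prop :=
  ∀ t ∈ S,
    HasDerivAt a (Fa (a t) (b t) (c t)) t ∧
    HasDerivAt b (Fb (a t) (b t) (c t)) t ∧
    HasDerivAt c (Fc (a t) (b t) (c t)) t

/-- along a solution of the gauged bracket Bach flow with `a > 0`,
the function `b²/a²` is differentiable and
`d/dt (b²/a²) ≤ −(2/3)·(b²/a²)·(a² + b² + c²)²`. -/
theorem deriv_b_sq_div_a_sq_le (I : Set ℝ) (hI : I.OrdConnected) (a b c : ℝ → ℝ)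
    (hsol : IsBachFlowSolution a b c I) (ha : ∀ t ∈ I, 0 < a t) :
    ∀ t ∈ I, ∃ d : ℝ, HasDerivAt (fun s => b s ^ 2 / a s ^ 2) d t ∧
      d ≤ -(2/3) * (b t ^ 2 / a t ^ 2) * (a t ^ 2 + b t ^ 2 + c t ^ 2) ^ 2 := by
  intro t ht
  obtain ⟨hda, hdb, _⟩ := hsol t ht
  have hat : 0 < a t := ha t ht
  have ha2 : (a t ^ 2 : ℝ) ≠ 0 := by positivity
  have hb2 : HasDerivAt (fun s => b s ^ 2) (2 * b t ^ 1 * Fb (a t) (b t) (c t)) t := by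
    simpa using (hdb.fun_pow 2)
  have ha2' : HasDerivAt (fun s => a s ^ 2) (2 * a t ^ 1 * Fa (a t) (b t) (c t)) t := by
    simpa using (hda.fun_pow 2)
  have hdiv := hb2.div ha2' ha2
  refine ⟨_, hdiv, ?_⟩
  have hQ : (2 * b t ^ 1 * Fb (a t) (b t) (c t) * a t ^ 2 -
      b t ^ 2 * (2 * a t ^ 1 * Fa (a t) (b t) (c t)))
      ≤ (-(2/3) * b t ^ 2 * (a t ^ 2 + b t ^ 2 + c t ^ 2) ^ 2) * a t ^ 2 := by
    simp only [Fa, Fb]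
    nlinarith [sq_nonneg (a t), sq_nonneg (b t), sq_nonneg (c t),
      mul_pos hat hat, sq_nonneg (a t * b t * c t), sq_nonneg (b t * c t),
      sq_nonneg (a t * b t), sq_nonneg (a t * c t),
      mul_nonneg (mul_nonneg (sq_nonneg (a t)) (sq_nonneg (b t))) (sq_nonneg (c t)),
      mul_nonneg (mul_nonneg (sq_nonneg (a t)) (sq_nonneg (b t))) (sq_nonneg (c t * c t)),
      mul_nonneg (mul_nonneg (sq_nonneg (a t * a t)) (sq_nonneg (b t))) (sq_nonneg (c t)),
      mul_nonneg (sq_nonneg (b t)) (sq_nonneg (c t * c t))]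
  have ha4 : (0:ℝ) < (a t ^ 2) ^ 2 := by positivity
  calc (2 * b t ^ 1 * Fb (a t) (b t) (c t) * a t ^ 2 -
      b t ^ 2 * (2 * a t ^ 1 * Fa (a t) (b t) (c t))) / (a t ^ 2) ^ 2
      ≤ ((-(2/3) * b t ^ 2 * (a t ^ 2 + b t ^ 2 + c t ^ 2) ^ 2) * a t ^ 2) / (a t ^ 2) ^ 2 :=
        div_le_div_of_nonneg_right hQ ha4.le
    _ = -(2/3) * (b t ^ 2 / a t ^ 2) * (a t ^ 2 + b t ^ 2 + c t ^ 2) ^ 2 := by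
        field_simp
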